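/- Let 𝒞₁, …, 𝒞_{d+1} be finite families of convex bodies in ℝ^d, and assume that for every colorful selection C₁ ∈ 𝒞₁, …, C_{d+1} ∈ 𝒞_{d+1}, the intersection ⋂_{i=1}^{d+1} C_i is nonempty. Then there exists an index j such that the intersection ⋂_{C ∈ 𝒞_j} C is nonempty. -/

import Mathlib

open MeasureTheory

/-- A convex body: a compact convex set with nonempty interior. -/
def IsConvexBody {d : ℕ} (K : Set (EuclideanSpace ℝ (Fin d))) : Prop :=
  Convex ℝ K ∧ IsCompact K ∧ (interior K).Nonempty

namespace ColorfulHellyAux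

/-- A linear order on lexicographic tuples (instance search fails to find it directly). -/
noncomputable instance lexLinearOrder {d : ℕ} : LinearOrder (Lex (Fin d → ℝ)) :=
  have : WellFoundedLT (Fin d) := inferInstance
  @Pi.Lex.linearOrder (Fin d) (fun _ => ℝ) _ this _

variable {d : ℕ}

/-- The lexicographic value of a point of Euclidean space. -/
def L (x : EuclideanSpace ℝ (Fin d)) : Lex (Fin d → ℝ) :=
  toLex (α := Fin d → ℝ) x

lemma L_injective : Function.Injective (L (d := d)) := fun _ _ h => WithLp.ofLp_injective (p := 2) h

/-- The strict lexicographic relation, in coordinate form. -/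
def Llt (x y : EuclideanSpace ℝ (Fin d)) : Prop :=
  ∃ i : Fin d, (∀ j, j < i → x j = y j) ∧ x i < y i

lemma llt_irrefl (x : EuclideanSpace ℝ (Fin d)) : ¬ Llt x x :=
  fun ⟨_, _, h⟩ => lt_irrefl _ h

lemma llt_asymm {x y : EuclideanSpace ℝ (Fin d)} (h1 : Llt x y) (h2 : Llt y x) : False := by
  obtain ⟨i, hi, hlt⟩ := h1
  obtain ⟨i', hi', hlt'⟩ := h2
  rcases lt_trichotomy i i' with h | rfl | h
  · rw [hi' i h] at hlt; exact lt_irrefl _ hlt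
  · exact lt_irrefl _ (hlt.trans hlt')
  · rw [hi i' h] at hlt'; exact lt_irrefl _ hlt'

lemma llt_total {x y : EuclideanSpace ℝ (Fin d)} (h : x ≠ y) : Llt x y ∨ Llt y x := by
  classical
  set s : Finset (Fin d) := Finset.univ.filter fun i => x i ≠ y i with hs
  have hsne : s.Nonempty := by
    by_contra hse
    rw [Finset.not_nonempty_iff_eq_empty] at hse
    apply h
    refine WithLp.ofLp_injective (p := 2) (funext ?_)
    intro i
    by_contra hxy
    have hmem : i ∈ s := by simp [hs, hxy]
    rw [hse] at hmem
    exact absurd hmem (Finset.notMem_empty i)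
  set i0 := s.min' hsne with hi0
  have hmem : x i0 ≠ y i0 := by
    have h9 : i0 ∈ s := s.min'_mem hsne
    rw [hs] at h9
    simpa using h9
  have hpre : ∀ j, j < i0 → x j = y j := by
    intro j hj
    by_contra hxy
    have hmem' : j ∈ s := by simp [hs, hxy]
    exact absurd (s.min'_le j hmem') (not_le.mpr hj)
  rcases lt_or_gt_of_ne hmem with h | h
  · exact Or.inl ⟨i0, hpre, h⟩
  · exact Or.inr ⟨i0, fun j hj => (hpre j hj).symm, h⟩

lemma le_iff_L {x y : EuclideanSpace ℝ (Fin d)} : L x ≤ L y ↔ (x = y ∨ Llt x y) := by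
  constructor
  · intro h
    have h' : L x = L y ∨ Pi.Lex (· < ·) (fun {_} => (· < ·)) (ofLex (L x)) (ofLex (L y)) := h
    exact h'.imp (fun e => L_injective e) (fun e => e)
  · intro h
    have h' : L x = L y ∨ Pi.Lex (· < ·) (fun {_} => (· < ·)) (ofLex (L x)) (ofLex (L y)) :=
      h.imp (fun e => congrArg L e) (fun e => e)
    exact h'

lemma not_le_iff_llt {x y : EuclideanSpace ℝ (Fin d)} :
    ¬ L x ≤ L y ↔ Llt y x := by
  rw [le_iff_L]
  constructor
  · intro h
    push_neg at h
    rcases llt_total h.1 with h1 | h1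
    · exact absurd h1 h.2
    · exact h1
  · intro h hle
    rcases hle with rfl | h2
    · exact llt_irrefl _ h
    · exact llt_asymm h2 h

lemma continuous_coord (i : Fin d) :
    Continuous fun y : EuclideanSpace ℝ (Fin d) => y i :=
  (EuclideanSpace.proj (𝕜 := ℝ) i).continuous

/-- Every nonempty compact set has a lexicographic minimum. -/
lemma exists_lexmin {K : Set (EuclideanSpace ℝ (Fin d))} (hK : IsCompact K)
    (hne : K.Nonempty) : ∃ x ∈ K, ∀ y ∈ K, L x ≤ L y := by
  classical
  have main : ∀ j : ℕ, j ≤ d → ∃ c : Fin d → ℝ,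
      ({y ∈ K | ∀ i : Fin d, (i : ℕ) < j → y i = c i}).Nonempty ∧
      (∀ y ∈ K, ∀ p : Fin d, (p : ℕ) < j →
        (∀ i : Fin d, i < p → y i = c i) → c p ≤ y p) := by
    intro j
    induction j with
    | zero =>
      intro _
      refine ⟨0, by simpa using hne, ?_⟩
      intro y _ p hp
      omega
    | succ j ih =>
      intro hj
      obtain ⟨c, hcne, hcmin⟩ := ih (by omega)
      have hjd : j < d := by omega
      set p : Fin d := ⟨j, hjd⟩ with hp
      have hpj : (p : ℕ) = j := by rw [hp]
      set Kj : Set (EuclideanSpace ℝ (Fin d)) :=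
        {y ∈ K | ∀ i : Fin d, (i : ℕ) < j → y i = c i} with hKj
      have hKjclosed : IsClosed Kj := by
        have h1 : Kj = K ∩ ⋂ i : Fin d, ⋂ (_ : (i : ℕ) < j), {y | y i = c i} := by
          ext y; simp [hKj, Set.mem_iInter]
        rw [h1]
        refine hK.isClosed.inter (isClosed_iInter fun i => isClosed_iInter fun _ => ?_)
        exact isClosed_eq (continuous_coord i) continuous_const
      have hKjc : IsCompact Kj :=
        hK.of_isClosed_subset hKjclosed (fun y hy => hy.1)
      obtain ⟨a, haK, hamin⟩ :=
        hKjc.exists_isMinOn hcne ((continuous_coord p).continuousOn)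
      refine ⟨Function.update c p (a p), ⟨a, haK.1, ?_⟩, ?_⟩
      · intro i hi
        rcases eq_or_ne i p with rfl | hip
        · simp
        · rw [Function.update_of_ne hip]
          refine haK.2 i ?_
          have hvne : (i : ℕ) ≠ (p : ℕ) := fun hh => hip (Fin.val_injective hh)
          omega
      · intro y hy q hq hqlt
        rcases eq_or_ne q p with rfl | hqp
        · have hyKj : y ∈ Kj := by
            refine ⟨hy, fun i hi => ?_⟩
            have h5 := hqlt i (by rw [Fin.lt_def, hpj]; exact hi)
            have hip : i ≠ p := by
              intro he
              rw [he, hpj] at hi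
              exact lt_irrefl _ hi
            rwa [Function.update_of_ne hip] at h5
          rw [Function.update_self]
          exact hamin hyKj
        · have hqj : (q : ℕ) < j := by
            have h7 : (q : ℕ) ≠ j := fun hh => hqp (Fin.val_injective (by rw [hpj]; exact hh))
            omega
          rw [Function.update_of_ne hqp]
          refine hcmin y hy q hqj fun i hi => ?_
          have h6 := hqlt i hi
          have hip : i ≠ p := by
            intro he
            rw [he] at hi
            rw [Fin.lt_def, hpj] at hi
            omega
          rwa [Function.update_of_ne hip] at h6
  obtain ⟨c, ⟨x, hxK, hxc⟩, hcmin⟩ := main d le_rfl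
  have hxc' : ∀ i : Fin d, x i = c i := fun i => hxc i i.isLt
  refine ⟨x, hxK, fun y hy => ?_⟩
  by_contra hlt
  obtain ⟨i, hji, hyi⟩ := not_le_iff_llt.mp hlt
  have : c i ≤ y i := hcmin y hy i i.isLt fun k hk => (hji k hk).trans (hxc' k)
  rw [← hxc' i] at this
  exact absurd (lt_of_lt_of_le hyi this) (lt_irrefl _)

/-- The set of points lexicographically smaller than a given point is convex. -/
lemma convex_lex_lt (b : EuclideanSpace ℝ (Fin d)) :
    Convex ℝ {y : EuclideanSpace ℝ (Fin d) | Llt y b} := by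
  intro y hy z hz s t hs ht hst
  rcases eq_or_lt_of_le hs with rfl | hs0
  · have ht1 : t = 1 := by linarith
    subst ht1
    simpa using hz
  rcases eq_or_lt_of_le ht with rfl | ht0
  · have hs1 : s = 1 := by linarith
    subst hs1
    simpa using hy
  obtain ⟨i, hi, hyi⟩ := hy
  obtain ⟨i', hi', hzi⟩ := hz
  have e : ∀ j : Fin d, s * b j + t * b j = b j := by
    intro j; rw [← add_mul, hst, one_mul]
  refine ⟨min i i', fun j hj => ?_, ?_⟩
  · have h1 : y j = b j := hi j (lt_of_lt_of_le hj (min_le_left _ _))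
    have h2 : z j = b j := hi' j (lt_of_lt_of_le hj (min_le_right _ _))
    have happ : (s • y + t • z) j = s * y j + t * z j := rfl
    rw [happ, h1, h2, e j]
  · have h1 : y (min i i') ≤ b (min i i') := by
      rcases lt_or_eq_of_le (min_le_left i i') with h | h
      · exact le_of_eq (hi _ h)
      · rw [h]; exact le_of_lt hyi
    have h2 : z (min i i') ≤ b (min i i') := by
      rcases lt_or_eq_of_le (min_le_right i i') with h | h
      · exact le_of_eq (hi' _ h)
      · rw [h]; exact le_of_lt hzi
    have h3 : y (min i i') < b (min i i') ∨ z (min i i') < b (min i i') := by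
      rcases le_total i i' with h | h
      · left; rw [min_eq_left h]; exact hyi
      · right; rw [min_eq_right h]; exact hzi
    have happ : (s • y + t • z) (min i i') = s * y (min i i') + t * z (min i i') := rfl
    rw [happ]
    rcases h3 with h3 | h3
    · have u1 := mul_lt_mul_of_pos_left h3 hs0
      have u2 := mul_le_mul_of_nonneg_left h2 ht
      linarith [e (min i i')]
    · have u1 := mul_le_mul_of_nonneg_left h1 hs
      have u2 := mul_lt_mul_of_pos_left h3 ht0
      linarith [e (min i i')]

end ColorfulHellyAux

open ColorfulHellyAux

/-- Colorful Helly Theorem (Lovász, Bárány). -/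
theorem colorful_helly {d : ℕ}
    (𝒞 : Fin (d + 1) → Finset (Set (EuclideanSpace ℝ (Fin d))))
    (hbody : ∀ i, ∀ S ∈ 𝒞 i, IsConvexBody S)
    (h : ∀ C : Fin (d + 1) → Set (EuclideanSpace ℝ (Fin d)),
      (∀ i, C i ∈ 𝒞 i) → (⋂ i, C i).Nonempty) :
    ∃ j, (⋂ S ∈ 𝒞 j, S).Nonempty := by
  classical
  by_cases hem : ∃ j, 𝒞 j = ∅
  · obtain ⟨j, hj⟩ := hem
    exact ⟨j, by simp [hj]⟩
  push_neg at hem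
  -- the type of colorful selections
  have hne : ∀ i, Nonempty {S // S ∈ 𝒞 i} := by
    intro i
    obtain ⟨S, hS⟩ := hem i
    exact ⟨⟨S, hS⟩⟩
  haveI : Nonempty (∀ i : Fin (d + 1), {S // S ∈ 𝒞 i}) := ⟨fun i => (hne i).some⟩
  set τ := ∀ i : Fin (d + 1), {S // S ∈ 𝒞 i} with hτ
  -- the intersection of a colorful selection
  have hKc : ∀ T : τ, IsCompact (⋂ i, (T i : Set (EuclideanSpace ℝ (Fin d)))) := by
    intro T
    exact IsCompact.of_isClosed_subset (hbody 0 _ (T 0).2).2.1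
      (isClosed_iInter fun i => (hbody i _ (T i).2).2.1.isClosed)
      (Set.iInter_subset _ 0)
  have hKne : ∀ T : τ, (⋂ i, (T i : Set (EuclideanSpace ℝ (Fin d)))).Nonempty :=
    fun T => h (fun i => T i) (fun i => (T i).2)
  choose x hxmem hxmin using fun T : τ => exists_lexmin (hKc T) (hKne T)
  -- choose the selection whose lex-min point is lex-maximal
  obtain ⟨T, hT⟩ := Finite.exists_max fun T : τ => L (x T)
  -- the key claim: for some k, x T is a lex-min of ⋂_{i ≠ k} T i
  have key : ∃ k, ∀ z ∈ ⋂ i, ⋂ (_ : i ≠ k), (T i : Set (EuclideanSpace ℝ (Fin d))),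
      L (x T) ≤ L z := by
    by_contra hcl
    push_neg at hcl
    have hcl' : ∀ k : Fin (d + 1),
        ∃ z, (z ∈ ⋂ i, ⋂ (_ : i ≠ k), (T i : Set (EuclideanSpace ℝ (Fin d)))) ∧
          Llt z (x T) := by
      intro k
      obtain ⟨z, hz1, hz2⟩ := hcl k
      exact ⟨z, hz1, not_le_iff_llt.mp (not_le.mpr hz2)⟩
    choose y hymem hylt using hcl'
    have hy : ∀ k i, i ≠ k → y k ∈ (T i : Set (EuclideanSpace ℝ (Fin d))) := by
      intro k i hik
      have := hymem k
      simp only [Set.mem_iInter] at this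
      exact this i hik
    set f : Option (Fin (d + 1)) → EuclideanSpace ℝ (Fin d) :=
      fun o => o.elim (x T) y with hf
    have hnai : ¬ AffineIndependent ℝ f := by
      rw [← finrank_vectorSpan_le_iff_not_affineIndependent ℝ f
        (by simp : Fintype.card (Option (Fin (d + 1))) = d + 2)]
      exact le_trans (Submodule.finrank_le _) (le_of_eq finrank_euclideanSpace_fin)
    obtain ⟨I, z, hzI, hzIc⟩ := Convex.radon_partition hnai
    -- arrange so that `none` is not in the first part
    obtain ⟨J, hnoneJ, hzJ, hzJc⟩ :
        ∃ J : Set (Option (Fin (d + 1))), none ∉ J ∧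
          z ∈ convexHull ℝ (f '' J) ∧ z ∈ convexHull ℝ (f '' Jᶜ) := by
      by_cases hn : none ∈ I
      · exact ⟨Iᶜ, fun hc => hc hn, hzIc, by rwa [compl_compl]⟩
      · exact ⟨I, hn, hzI, hzIc⟩
    -- z is lexicographically smaller than x T
    have hzlt : Llt z (x T) := by
      have hsub : f '' J ⊆ {v | Llt v (x T)} := by
        rintro v ⟨o, hoJ, rfl⟩
        cases o with
        | none => exact absurd hoJ hnoneJ
        | some k => exact hylt k
      exact convexHull_min hsub (convex_lex_lt (x T)) hzJ
    -- z lies in every set of the selection T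
    have hzK : z ∈ ⋂ i, (T i : Set (EuclideanSpace ℝ (Fin d))) := by
      rw [Set.mem_iInter]
      intro i
      by_cases hiJ : some i ∈ J
      · have hsub : f '' Jᶜ ⊆ (T i : Set (EuclideanSpace ℝ (Fin d))) := by
          rintro v ⟨o, hoJc, rfl⟩
          cases o with
          | none =>
            have := hxmem T
            rw [Set.mem_iInter] at this
            exact this i
          | some k =>
            refine hy k i fun hik => ?_
            subst hik
            exact hoJc hiJ
        exact convexHull_min hsub (hbody i _ (T i).2).1 hzJc
      · have hsub : f '' J ⊆ (T i : Set (EuclideanSpace ℝ (Fin d))) := by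
          rintro v ⟨o, hoJ, rfl⟩
          cases o with
          | none => exact absurd hoJ hnoneJ
          | some k =>
            refine hy k i fun hik => ?_
            subst hik
            exact hiJ hoJ
        exact convexHull_min hsub (hbody i _ (T i).2).1 hzJ
    exact not_le_iff_llt.mpr hzlt (hxmin T z hzK)
  obtain ⟨k, hk⟩ := key
  refine ⟨k, x T, ?_⟩
  rw [Set.mem_iInter₂]
  intro D hD
  by_contra hxD
  -- replace the k-th set by D to get a selection with a lex-larger lex-min point
  set T' : τ := Function.update T k ⟨D, hD⟩ with hT'
  have hT'i : ∀ i, i ≠ k → (T' i : Set (EuclideanSpace ℝ (Fin d))) = T i := by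
    intro i hik
    rw [hT', Function.update_of_ne hik]
  have hx'Mk : x T' ∈ ⋂ i, ⋂ (_ : i ≠ k), (T i : Set (EuclideanSpace ℝ (Fin d))) := by
    simp only [Set.mem_iInter]
    intro i hik
    have := hxmem T'
    rw [Set.mem_iInter] at this
    have h1 := this i
    rwa [hT'i i hik] at h1
  have h1 : L (x T) ≤ L (x T') := hk _ hx'Mk
  have h2 : L (x T') ≤ L (x T) := hT T'
  have hxx : x T' = x T := L_injective (le_antisymm h2 h1)
  have : x T' ∈ (T' k : Set (EuclideanSpace ℝ (Fin d))) := by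
    have := hxmem T'
    rw [Set.mem_iInter] at this
    exact this k
  rw [hT', Function.update_self, hxx] at this
  exact hxD this
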